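/- arXiv:2401.03981 — 5 statements merged into one kernel-verified Lean document; each statement's English description precedes it below -/
import Mathlib

section
/- Let Ω ⊆ ℝ^d be a convex open set, u : Ω → ℝ^d a Lipschitz vector field, x ∈ Ω, and Δt > 0 with Δt · L < 1, where L is the Lipschitz constant of u. If for some boundary hyperplane Γ with unit normal n there is a closest point x_Γ ∈ Γ to x with u(x_Γ) · n = 0, then |(x − (x − Δt·u(x))) · n| ≤ dist(x, Γ); i.e., the Euler-step departure point x − Δt·u(x) does not cross Γ. -/
open scoped RealInnerProductSpace

/-- The Euler-step departure point does not cross a boundary hyperplane `Γ`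
(with unit normal `n`) on which the velocity is tangential: if `x_Γ` is the
closest point of `Γ` to `x`, `u` is `L`-Lipschitz, `⟪u x_Γ, n⟫ = 0` and
`Δt * L < 1`, then `|⟪x - (x - Δt • u x), n⟫| ≤ dist x Γ`. -/
theorem euler_step_does_not_cross_boundary {d : ℕ}
    (Ω : Set (EuclideanSpace ℝ (Fin d))) (hΩconv : Convex ℝ Ω) (hΩopen : IsOpen Ω)
    (u : EuclideanSpace ℝ (Fin d) → EuclideanSpace ℝ (Fin d))
    (L : NNReal) (hu : LipschitzWith L u)
    (x : EuclideanSpace ℝ (Fin d)) (hx : x ∈ Ω)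
    (Δt : ℝ) (hΔt : 0 < Δt) (hsmall : Δt * L < 1)
    (n xΓ : EuclideanSpace ℝ (Fin d)) (hn : ‖n‖ = 1)
    (Γ : Set (EuclideanSpace ℝ (Fin d)))
    (hΓ : Γ = {y | ⟪y - xΓ, n⟫ = 0})
    (hclosest : ∀ y ∈ Γ, ‖x - xΓ‖ ≤ ‖x - y‖)
    (htang : ⟪u xΓ, n⟫ = 0) :
    |⟪x - (x - Δt • u x), n⟫| ≤ Metric.infDist x Γ := by
  have hxΓ : xΓ ∈ Γ := by simp [hΓ]
  have hΓne : Γ.Nonempty := ⟨xΓ, hxΓ⟩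
  have hinf : ‖x - xΓ‖ ≤ Metric.infDist x Γ := by
    by_contra h
    push_neg at h
    obtain ⟨y, hy, hlt⟩ := (Metric.infDist_lt_iff hΓne).mp h
    rw [dist_eq_norm] at hlt
    exact absurd (hclosest y hy) (not_le.mpr hlt)
  have key : |⟪x - (x - Δt • u x), n⟫| ≤ Δt * L * ‖x - xΓ‖ := by
    have h1 : x - (x - Δt • u x) = Δt • u x := by abel
    rw [h1, real_inner_smul_left]
    have h2 : ⟪u x, n⟫ = ⟪u x - u xΓ, n⟫ := by
      rw [inner_sub_left, htang]; ring
    rw [h2, abs_mul, abs_of_pos hΔt]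
    have h3 : |⟪u x - u xΓ, n⟫| ≤ ‖u x - u xΓ‖ := by
      calc |⟪u x - u xΓ, n⟫| ≤ ‖u x - u xΓ‖ * ‖n‖ := abs_real_inner_le_norm _ _
        _ = ‖u x - u xΓ‖ := by rw [hn, mul_one]
    have h4 : ‖u x - u xΓ‖ ≤ L * ‖x - xΓ‖ := by
      have := hu.dist_le_mul x xΓ
      rwa [dist_eq_norm, dist_eq_norm] at this
    calc Δt * |⟪u x - u xΓ, n⟫| ≤ Δt * (L * ‖x - xΓ‖) := by
          exact mul_le_mul_of_nonneg_left (h3.trans h4) hΔt.le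
      _ = Δt * L * ‖x - xΓ‖ := by ring
  calc |⟪x - (x - Δt • u x), n⟫| ≤ Δt * L * ‖x - xΓ‖ := key
    _ ≤ 1 * ‖x - xΓ‖ := by
        apply mul_le_mul_of_nonneg_right hsmall.le (norm_nonneg _)
    _ = ‖x - xΓ‖ := one_mul _
    _ ≤ Metric.infDist x Γ := hinf
end

section
/- Let u : Ω → ℝ^d be Lipschitz with u · n = 0 on the boundary of the unit square Ω = (0,1)², and suppose Δt · ‖u‖_{W^{1,∞}} < 1. Then for every x ∈ Ω, the approximate departure point y_Δt(x) = x − Δt·u(x) lies in the closure of Ω. -/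
/-- Interval arithmetic helper: if `a ∈ (0,1)` and `|v| ≤ L*a`, `|v| ≤ L*(1-a)`
with `Δt*L < 1`, `0 < Δt`, then `a - Δt*v ∈ [0,1]`. -/
lemma dep_aux {a v Δt L : ℝ} (hΔt : 0 < Δt) (_hL : 0 ≤ L) (hsmall : Δt * L < 1)
    (ha : 0 < a) (ha' : a < 1) (h0 : |v| ≤ L * a) (h1 : |v| ≤ L * (1 - a)) :
    a - Δt * v ∈ Set.Icc (0:ℝ) 1 := by
  constructor
  · have : Δt * v ≤ Δt * (L * a) := by
      have := (abs_le.mp h0).2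
      nlinarith
    nlinarith
  · have : -(Δt * (L * (1 - a))) ≤ Δt * v := by
      have := (abs_le.mp h1).1
      nlinarith
    nlinarith

/-- On the unit square, a Lipschitz velocity field tangential to the boundary
produces Euler-step departure points that remain in the closure of the square. -/
theorem departure_point_in_closure_unit_square
    (Ω : Set (ℝ × ℝ)) (hΩ : Ω = Set.Ioo (0:ℝ) 1 ×ˢ Set.Ioo (0:ℝ) 1)
    (u : ℝ × ℝ → ℝ × ℝ) (L : NNReal) (hu : LipschitzOnWith L u (closure Ω))
    (htang : ∀ p ∈ closure Ω,
      ((p.1 = 0 ∨ p.1 = 1) → (u p).1 = 0) ∧ ((p.2 = 0 ∨ p.2 = 1) → (u p).2 = 0))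
    (Δt : ℝ) (hΔt : 0 < Δt) (hsmall : Δt * L < 1) :
    ∀ x ∈ Ω, x - Δt • u x ∈ closure Ω := by
  have hcl : closure Ω = Set.Icc (0:ℝ) 1 ×ˢ Set.Icc (0:ℝ) 1 := by
    rw [hΩ, closure_prod_eq, closure_Ioo (by norm_num : (0:ℝ) ≠ 1)]
  intro x hx
  rw [hΩ] at hx
  obtain ⟨⟨hx10, hx11⟩, hx20, hx21⟩ := hx
  have hxcl : x ∈ closure Ω := by
    rw [hcl]
    exact ⟨⟨hx10.le, hx11.le⟩, hx20.le, hx21.le⟩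
  -- corner points on the four boundary edges
  have hmem : ∀ a b : ℝ, a ∈ Set.Icc (0:ℝ) 1 → b ∈ Set.Icc (0:ℝ) 1 →
      ((a, b) : ℝ × ℝ) ∈ closure Ω := by
    intro a b ha hb; rw [hcl]; exact ⟨ha, hb⟩
  have key : ∀ (p : ℝ × ℝ), p ∈ closure Ω →
      dist (u x) (u p) ≤ L * dist x p := fun p hp => hu.dist_le_mul x hxcl p hp
  have hdist1 : ∀ p : ℝ × ℝ, |(u x).1 - (u p).1| ≤ dist (u x) (u p) := by
    intro p
    rw [Prod.dist_eq]
    exact le_max_of_le_left (le_of_eq (Real.dist_eq _ _).symm)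
  have hdist2 : ∀ p : ℝ × ℝ, |(u x).2 - (u p).2| ≤ dist (u x) (u p) := by
    intro p
    rw [Prod.dist_eq]
    exact le_max_of_le_right (le_of_eq (Real.dist_eq _ _).symm)
  have hx2Icc : x.2 ∈ Set.Icc (0:ℝ) 1 := ⟨hx20.le, hx21.le⟩
  have hx1Icc : x.1 ∈ Set.Icc (0:ℝ) 1 := ⟨hx10.le, hx11.le⟩
  -- bound on first component: compare with (0, x.2) and (1, x.2)
  have h10 : |(u x).1| ≤ L * x.1 := by
    have hp : ((0:ℝ), x.2) ∈ closure Ω := hmem 0 x.2 ⟨le_refl 0, zero_le_one⟩ hx2Icc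
    have hz : (u ((0:ℝ), x.2)).1 = 0 := ((htang _ hp).1 (Or.inl rfl))
    have hd : dist x ((0:ℝ), x.2) = x.1 := by
      rw [Prod.dist_eq]
      simp [Real.dist_eq, abs_of_pos hx10]
      linarith
    calc |(u x).1| = |(u x).1 - (u ((0:ℝ), x.2)).1| := by rw [hz, sub_zero]
      _ ≤ dist (u x) (u ((0:ℝ), x.2)) := hdist1 _
      _ ≤ L * dist x ((0:ℝ), x.2) := key _ hp
      _ = L * x.1 := by rw [hd]
  have h11 : |(u x).1| ≤ L * (1 - x.1) := by
    have hp : ((1:ℝ), x.2) ∈ closure Ω := hmem 1 x.2 ⟨zero_le_one, le_refl 1⟩ hx2Icc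
    have hz : (u ((1:ℝ), x.2)).1 = 0 := ((htang _ hp).1 (Or.inr rfl))
    have hd : dist x ((1:ℝ), x.2) = 1 - x.1 := by
      rw [Prod.dist_eq]
      simp [Real.dist_eq, abs_of_neg (by linarith : x.1 - 1 < 0)]
      linarith
    calc |(u x).1| = |(u x).1 - (u ((1:ℝ), x.2)).1| := by rw [hz, sub_zero]
      _ ≤ dist (u x) (u ((1:ℝ), x.2)) := hdist1 _
      _ ≤ L * dist x ((1:ℝ), x.2) := key _ hp
      _ = L * (1 - x.1) := by rw [hd]
  have h20 : |(u x).2| ≤ L * x.2 := by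
    have hp : (x.1, (0:ℝ)) ∈ closure Ω := hmem x.1 0 hx1Icc ⟨le_refl 0, zero_le_one⟩
    have hz : (u (x.1, (0:ℝ))).2 = 0 := ((htang _ hp).2 (Or.inl rfl))
    have hd : dist x (x.1, (0:ℝ)) = x.2 := by
      rw [Prod.dist_eq]
      simp [Real.dist_eq, abs_of_pos hx20]
      linarith
    calc |(u x).2| = |(u x).2 - (u (x.1, (0:ℝ))).2| := by rw [hz, sub_zero]
      _ ≤ dist (u x) (u (x.1, (0:ℝ))) := hdist2 _
      _ ≤ L * dist x (x.1, (0:ℝ)) := key _ hp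
      _ = L * x.2 := by rw [hd]
  have h21 : |(u x).2| ≤ L * (1 - x.2) := by
    have hp : (x.1, (1:ℝ)) ∈ closure Ω := hmem x.1 1 hx1Icc ⟨zero_le_one, le_refl 1⟩
    have hz : (u (x.1, (1:ℝ))).2 = 0 := ((htang _ hp).2 (Or.inr rfl))
    have hd : dist x (x.1, (1:ℝ)) = 1 - x.2 := by
      rw [Prod.dist_eq]
      simp [Real.dist_eq, abs_of_neg (by linarith : x.2 - 1 < 0)]
      linarith
    calc |(u x).2| = |(u x).2 - (u (x.1, (1:ℝ))).2| := by rw [hz, sub_zero]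
      _ ≤ dist (u x) (u (x.1, (1:ℝ))) := hdist2 _
      _ ≤ L * dist x (x.1, (1:ℝ)) := key _ hp
      _ = L * (1 - x.2) := by rw [hd]
  rw [hcl]
  refine ⟨?_, ?_⟩
  · exact dep_aux hΔt L.coe_nonneg hsmall hx10 hx11 h10 h11
  · exact dep_aux hΔt L.coe_nonneg hsmall hx20 hx21 h20 h21
end

section
/- Let y : ℝ → ℝ^d solve y'(s) = u(y(s), s) with y(t) = x, where u is C². Then y(t − Δt) − (x − Δt·u(x,t)) = (Δt²/2)·(Du/Dt)(x,t) + O(Δt³) as Δt → 0, where Du/Dt = ∂u/∂t + (u·∇)u is the material derivative. -/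
/-- Backward-Euler departure point expansion: if `y` is the characteristic
through `(x, t)` of a `C²` velocity field `u`, then
`y (t-Δt) - (x - Δt • u (x,t)) = (Δt²/2) • (Du/Dt)(x,t) + O(Δt³)`, where the
material derivative `Du/Dt = ∂ₜu + (u·∇)u` is `fderiv u (x,t) (u (x,t), 1)`. -/
theorem departure_point_expansion {d : ℕ}
    (u : EuclideanSpace ℝ (Fin d) × ℝ → EuclideanSpace ℝ (Fin d))
    (hu : ContDiff ℝ 2 u)
    (y : ℝ → EuclideanSpace ℝ (Fin d)) (x : EuclideanSpace ℝ (Fin d)) (t : ℝ)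
    (hy : ∀ s, HasDerivAt y (u (y s, s)) s) (hyt : y t = x) :
    ∃ C > (0:ℝ), ∃ δ > (0:ℝ), ∀ Δt : ℝ, 0 < Δt → Δt < δ →
      ‖y (t - Δt) - (x - Δt • u (x, t)) -
          (Δt ^ 2 / 2) • (fderiv ℝ u (x, t)) (u (x, t), 1)‖ ≤ C * Δt ^ 3 := by
  have hud : Differentiable ℝ u := hu.differentiable (by norm_num)
  set v : EuclideanSpace ℝ (Fin d) := u (x, t) with hv
  set A : EuclideanSpace ℝ (Fin d) := (fderiv ℝ u (x, t)) (u (x, t), 1) with hA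
  have hyd : Differentiable ℝ y := fun s => (hy s).differentiableAt
  have hyc : Continuous y := hyd.continuous
  -- y is C¹
  have hy1 : ContDiff ℝ 1 y := by
    rw [contDiff_one_iff_deriv]
    refine ⟨hyd, ?_⟩
    have hde : deriv y = fun s => u (y s, s) := funext fun s => (hy s).deriv
    rw [hde]
    exact hu.continuous.comp (hyc.prodMk continuous_id)
  -- The "second derivative" function W
  set W : ℝ → EuclideanSpace ℝ (Fin d) :=
    fun τ => (fderiv ℝ u (y τ, τ)) (u (y τ, τ), 1) with hW
  have hWc1 : ContDiff ℝ 1 W := by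
    have h1 : ContDiff ℝ 1 (fun τ : ℝ => (y τ, τ)) := hy1.prodMk contDiff_id
    have h2 : ContDiff ℝ 1 (fderiv ℝ u) := hu.fderiv_right (by norm_num)
    have h3 : ContDiff ℝ 1
        (fun p : EuclideanSpace ℝ (Fin d) × ℝ => (fderiv ℝ u p) (u p, 1)) :=
      h2.clm_apply ((hu.of_le one_le_two).prodMk contDiff_const)
    exact h3.comp h1
  obtain ⟨K, s0, hs0, hKlip⟩ := hWc1.contDiffAt (x := t) |>.exists_lipschitzOnWith
  obtain ⟨ε, hε, hball⟩ := Metric.mem_nhds_iff.mp hs0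
  refine ⟨(K : ℝ) + 1, by positivity, ε, hε, ?_⟩
  intro Δt hΔ hΔε
  -- derivative of s ↦ t - s
  have hts : ∀ s : ℝ, HasDerivAt (fun s : ℝ => t - s) (-1) s := fun s => by
    simpa using (hasDerivAt_id s).const_sub t
  -- derivative of s ↦ y (t - s)
  have hF : ∀ s : ℝ, HasDerivAt (fun s : ℝ => y (t - s))
      ((-1 : ℝ) • u (y (t - s), t - s)) s := fun s => (hy (t - s)).scomp s (hts s)
  -- derivative of s ↦ (y (t-s), t-s)
  have hg : ∀ s : ℝ, HasDerivAt (fun s : ℝ => (y (t - s), t - s))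
      (((-1 : ℝ) • u (y (t - s), t - s), -1)) s := fun s => (hF s).prodMk (hts s)
  -- derivative of s ↦ u (y (t-s), t-s)
  have hU : ∀ s : ℝ, HasDerivAt (fun s : ℝ => u (y (t - s), t - s))
      (-(W (t - s))) s := by
    intro s
    have h0 := (hud (y (t - s), t - s)).hasFDerivAt.comp_hasDerivAt s (hg s)
    have heq : (fderiv ℝ u (y (t - s), t - s))
        (((-1 : ℝ) • u (y (t - s), t - s), -1)) = -(W (t - s)) := by
      have : (((-1 : ℝ) • u (y (t - s), t - s), (-1 : ℝ)))
          = -((u (y (t - s), t - s), (1 : ℝ))) := by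
        simp [Prod.ext_iff]
      rw [this, map_neg]
    rw [heq] at h0
    exact h0
  -- Taylor remainder r and its derivatives
  set r : ℝ → EuclideanSpace ℝ (Fin d) :=
    fun s => y (t - s) - y t + s • v - (s ^ 2 / 2) • A with hrdef
  set r' : ℝ → EuclideanSpace ℝ (Fin d) :=
    fun s => v - u (y (t - s), t - s) - s • A with hr'def
  have hsmul : ∀ s : ℝ, HasDerivAt (fun s : ℝ => s • v) v s := by
    intro s
    simpa using (hasDerivAt_id s).smul_const v
  have hsq : ∀ s : ℝ, HasDerivAt (fun s : ℝ => (s ^ 2 / 2) • A) (s • A) s := by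
    intro s
    have := ((hasDerivAt_pow 2 s).div_const 2).smul_const A
    simpa using this
  have hr : ∀ s : ℝ, HasDerivAt r (r' s) s := by
    intro s
    have h1 := (((hF s).sub_const (y t)).add (hsmul s)).sub (hsq s)
    have : (-1 : ℝ) • u (y (t - s), t - s) + v - s • A = r' s := by
      rw [hr'def]; module
    rwa [this] at h1
  have hr' : ∀ s : ℝ, HasDerivAt r' (W (t - s) - A) s := by
    intro s
    have h1 := ((hU s).const_sub v).sub ((hasDerivAt_id s).smul_const A)
    rw [neg_neg, one_smul] at h1
    exact h1
  -- Lipschitz bound on W near t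
  have hWA : ∀ s ∈ Set.Ico (0 : ℝ) Δt, ‖W (t - s) - A‖ ≤ (K : ℝ) * Δt := by
    intro s hs
    have hAW : A = W t := by simp only [hW, hA, hyt]
    have hmem1 : t - s ∈ s0 := by
      apply hball
      simp only [Metric.mem_ball, Real.dist_eq]
      rw [abs_of_nonpos (by linarith [hs.1, hs.2])]
      linarith [hs.2]
    have hmem2 : t ∈ s0 := hball (Metric.mem_ball_self hε)
    have := hKlip.dist_le_mul (t - s) hmem1 t hmem2
    rw [dist_eq_norm, Real.dist_eq] at this
    rw [hAW]
    calc ‖W (t - s) - W t‖ ≤ (K : ℝ) * |t - s - t| := this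
      _ ≤ (K : ℝ) * Δt := by
          apply mul_le_mul_of_nonneg_left _ K.coe_nonneg
          rw [show t - s - t = -s by ring, abs_neg, abs_of_nonneg hs.1]
          linarith [hs.2]
  -- first mean value step: bound r'
  have step1 : ∀ s ∈ Set.Icc (0 : ℝ) Δt, ‖r' s - r' 0‖ ≤ ((K : ℝ) * Δt) * (s - 0) :=
    norm_image_sub_le_of_norm_deriv_le_segment'
      (fun s _ => (hr' s).hasDerivWithinAt) hWA
  have hr'0 : r' 0 = 0 := by simp [hr'def, hyt, hv]
  have bound1 : ∀ s ∈ Set.Ico (0 : ℝ) Δt, ‖r' s‖ ≤ (K : ℝ) * Δt ^ 2 := by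
    intro s hs
    have := step1 s ⟨hs.1, le_of_lt hs.2⟩
    rw [hr'0, sub_zero, sub_zero] at this
    calc ‖r' s‖ ≤ (K : ℝ) * Δt * s := this
      _ ≤ (K : ℝ) * Δt * Δt := by
          apply mul_le_mul_of_nonneg_left (le_of_lt hs.2)
          positivity
      _ = (K : ℝ) * Δt ^ 2 := by ring
  -- second mean value step: bound r
  have step2 : ∀ s ∈ Set.Icc (0 : ℝ) Δt, ‖r s - r 0‖ ≤ ((K : ℝ) * Δt ^ 2) * (s - 0) :=
    norm_image_sub_le_of_norm_deriv_le_segment'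
      (fun s _ => (hr s).hasDerivWithinAt) bound1
  have hr0 : r 0 = 0 := by simp [hrdef]
  have final := step2 Δt ⟨le_of_lt hΔ, le_refl _⟩
  rw [hr0, sub_zero, sub_zero] at final
  have hgoal : y (t - Δt) - (x - Δt • u (x, t)) - (Δt ^ 2 / 2) • (fderiv ℝ u (x, t)) (u (x, t), 1)
      = r Δt := by
    rw [hrdef, hyt, ← hv, ← hA]; abel_nf
  rw [hgoal]
  calc ‖r Δt‖ ≤ (K : ℝ) * Δt ^ 2 * Δt := final
    _ = (K : ℝ) * Δt ^ 3 := by ring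
    _ ≤ ((K : ℝ) + 1) * Δt ^ 3 := by nlinarith [K.coe_nonneg, pow_pos hΔ 3]
end

section
/- Let u be C² and ζ a C¹ tensor field. With y(s) the characteristic through (x,t) and y_Δt(x) = x − Δt·u(x,t), one has ζ(y(t−Δt), t−Δt) − ζ(y_Δt(x), t−Δt) = (Δt²/2)·((Du/Dt)·∇)ζ(x, t) + O(Δt³). -/
attribute [local instance] Matrix.normedAddCommGroup Matrix.normedSpace

set_option maxHeartbeats 1000000

open Set Metric intervalIntegral

lemma norm_le_integral_bound {F : Type*} [NormedAddCommGroup F] [NormedSpace ℝ F] [CompleteSpace F]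
    (f f' : ℝ → F) (bound : ℝ → ℝ) (s t : ℝ) (hst : s ≤ t)
    (hderiv : ∀ r, HasDerivAt f (f' r) r) (hcont : Continuous f')
    (hbc : Continuous bound) (hft : f t = 0)
    (hbound : ∀ r ∈ Set.Icc s t, ‖f' r‖ ≤ bound r) :
    ‖f s‖ ≤ |∫ r in s..t, bound r| := by
  have h1 : ∫ r in s..t, f' r = f t - f s :=
    integral_eq_sub_of_hasDerivAt (fun r _ => hderiv r) (hcont.intervalIntegrable s t)
  have h2 : ‖f s‖ = ‖∫ r in s..t, f' r‖ := by rw [h1, hft, zero_sub, norm_neg]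
  rw [h2]
  refine intervalIntegral.norm_integral_le_abs_of_norm_le ?_ (hbc.intervalIntegrable s t)
  refine (MeasureTheory.ae_restrict_iff' measurableSet_uIoc).2 (.of_forall fun r hr => ?_)
  rw [Set.uIoc_of_le hst] at hr
  exact hbound r ⟨hr.1.le, hr.2⟩

lemma taylor_two_bound {F : Type*} [NormedAddCommGroup F] [NormedSpace ℝ F] [CompleteSpace F]
    (f f₁ f₂ : ℝ → F) (t δ K : ℝ) (hK : 0 ≤ K)
    (hf : ∀ s, HasDerivAt f (f₁ s) s) (hf₁ : ∀ s, HasDerivAt f₁ (f₂ s) s)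
    (hcont : Continuous f₂) (hft : f t = 0) (hf₁t : f₁ t = 0)
    (hbound : ∀ s ∈ Set.Icc (t - δ) t, ‖f₂ s‖ ≤ K * (t - s)) :
    ∀ s ∈ Set.Icc (t - δ) t, ‖f s‖ ≤ K * (t - s) ^ 3 / 6 := by
  have hb1 : ∀ s ∈ Set.Icc (t - δ) t, ‖f₁ s‖ ≤ K * (t - s) ^ 2 / 2 := by
    intro s hs
    have key := norm_le_integral_bound f₁ f₂ (fun τ => K * (t - τ)) s t hs.2 hf₁ hcont
      (by continuity) hf₁t (fun τ hτ => hbound τ ⟨le_trans hs.1 hτ.1, hτ.2⟩)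
    have hint : ∫ τ in s..t, K * (t - τ) = K * (t - s) ^ 2 / 2 := by
      rw [intervalIntegral.integral_const_mul, intervalIntegral.integral_comp_sub_left
        (fun x => x) t]
      simp [integral_id]
      ring
    rw [hint] at key
    refine key.trans (le_of_eq (abs_of_nonneg ?_))
    have : (0:ℝ) ≤ t - s := by linarith [hs.2]
    positivity
  intro s hs
  have hc₁ : Continuous f₁ := Differentiable.continuous (fun r => (hf₁ r).differentiableAt)
  have key := norm_le_integral_bound f f₁ (fun τ => K * (t - τ) ^ 2 / 2) s t hs.2 hf hc₁
    (by continuity) hft (fun τ hτ => hb1 τ ⟨le_trans hs.1 hτ.1, hτ.2⟩)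
  have hint : ∫ τ in s..t, K * (t - τ) ^ 2 / 2 = K * (t - s) ^ 3 / 6 := by
    have : (fun τ => K * (t - τ) ^ 2 / 2) = fun τ => (K / 2) * ((fun x => x ^ 2) (t - τ)) := by
      funext τ; ring
    rw [this, intervalIntegral.integral_const_mul,
      intervalIntegral.integral_comp_sub_left (fun x => x ^ 2) t]
    simp [integral_pow]
    ring
  rw [hint] at key
  refine key.trans (le_of_eq (abs_of_nonneg ?_))
  have : (0:ℝ) ≤ t - s := by linarith [hs.2]
  positivity

/-- Evaluating a smooth tensor field `ζ` at the approximate departure point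
`x - Δt • u(x,t)` rather than at the exact one `y (t-Δt)` produces the error
`(Δt²/2) • ((Du/Dt)·∇)ζ (x,t) + O(Δt³)`. -/
theorem tensor_at_approximate_departure_point {d : ℕ}
    (u : EuclideanSpace ℝ (Fin d) × ℝ → EuclideanSpace ℝ (Fin d))
    (hu : ContDiff ℝ 2 u)
    (ζ : EuclideanSpace ℝ (Fin d) × ℝ → Matrix (Fin d) (Fin d) ℝ)
    (hζ : ContDiff ℝ 2 ζ)
    (y : ℝ → EuclideanSpace ℝ (Fin d)) (x : EuclideanSpace ℝ (Fin d)) (t : ℝ)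
    (hy : ∀ s, HasDerivAt y (u (y s, s)) s) (hyt : y t = x) :
    ∃ C > (0:ℝ), ∃ δ > (0:ℝ), ∀ Δt : ℝ, 0 < Δt → Δt < δ →
      ‖ζ (y (t - Δt), t - Δt) - ζ (x - Δt • u (x, t), t - Δt) -
          (Δt ^ 2 / 2) •
            (fderiv ℝ (fun z => ζ (z, t)) x) ((fderiv ℝ u (x, t)) (u (x, t), 1))‖
        ≤ C * Δt ^ 3 := by
  set v := u (x, t) with hv
  set A := (fderiv ℝ u (x, t)) (v, 1) with hA
  set G : EuclideanSpace ℝ (Fin d) × ℝ → EuclideanSpace ℝ (Fin d) :=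
    fun p => (fderiv ℝ u p) (u p, 1) with hGdef
  have hu1 : ContDiff ℝ 1 u := hu.of_le one_le_two
  have hud : Differentiable ℝ u := hu1.differentiable one_ne_zero
  have hζd : Differentiable ℝ ζ := (hζ.of_le one_le_two).differentiable one_ne_zero
  have hG : ContDiff ℝ 1 G :=
    (hu.fderiv_right (by norm_num)).clm_apply (hu1.prodMk contDiff_const)
  letI : NormedAddCommGroup (EuclideanSpace ℝ (Fin d) × ℝ →L[ℝ] Matrix (Fin d) (Fin d) ℝ) :=
    ContinuousLinearMap.toNormedAddCommGroup
  letI : NormedSpace ℝ (EuclideanSpace ℝ (Fin d) × ℝ →L[ℝ] Matrix (Fin d) (Fin d) ℝ) :=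
    ContinuousLinearMap.toNormedSpace
  have hζ' : ContDiff ℝ 1 (fderiv ℝ ζ) := hζ.fderiv_right (by norm_num)
  obtain ⟨K₁, s₁, hs₁, hG_lip⟩ := hG.contDiffAt (x := (x, t)).exists_lipschitzOnWith
  obtain ⟨K₂, s₂, hs₂, hζ_lip⟩ := (hζ'.contDiffAt (x := (x, t))).exists_lipschitzOnWith
  obtain ⟨r₁, hr₁pos, hr₁⟩ := Metric.nhds_basis_closedBall.mem_iff.1 hs₁
  obtain ⟨r₂, hr₂pos, hr₂⟩ := Metric.nhds_basis_closedBall.mem_iff.1 hs₂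
  have hycont : Continuous y := Differentiable.continuous (fun s => (hy s).differentiableAt)
  -- velocity bound near t
  have hvc : ContinuousAt (fun s => ‖u (y s, s)‖) t :=
    ((hud.continuous.comp (hycont.prodMk continuous_id)).norm).continuousAt
  have h0 : ‖u (y t, t)‖ < ‖v‖ + 1 := by rw [hyt, ← hv]; linarith
  obtain ⟨ε, hεpos, hball⟩ := Metric.eventually_nhds_iff.1 (hvc (Iio_mem_nhds h0))
  set δ' : ℝ := min (ε / 2) (r₁ / (‖v‖ + 1)) with hδ'def
  have hv1 : (0:ℝ) < ‖v‖ + 1 := by positivity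
  have hδ'pos : 0 < δ' := lt_min (by positivity) (by positivity)
  have hδ'ε : δ' < ε := (min_le_left _ _).trans_lt (by linarith)
  have hδ'r₁ : (‖v‖ + 1) * δ' ≤ r₁ := by
    have := min_le_right (ε / 2) (r₁ / (‖v‖ + 1))
    calc (‖v‖ + 1) * δ' ≤ (‖v‖ + 1) * (r₁ / (‖v‖ + 1)) := by
          exact mul_le_mul_of_nonneg_left this hv1.le
      _ = r₁ := by field_simp
  -- speed bound on the interval
  have hspeed : ∀ r ∈ Icc (t - δ') t, ‖u (y r, r)‖ ≤ ‖v‖ + 1 := by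
    intro r hr
    have : dist r t < ε := by
      rw [Real.dist_eq, abs_of_nonpos (by linarith [hr.2])]
      linarith [hr.1]
    exact (hball this).le
  -- Lipschitz bound on y
  have hy_lip : ∀ s ∈ Icc (t - δ') t, ‖y s - x‖ ≤ (‖v‖ + 1) * (t - s) := by
    intro s hs
    have ht_mem : t ∈ Icc (t - δ') t := ⟨by linarith, le_rfl⟩
    have key := (convex_Icc (t - δ') t).norm_image_sub_le_of_norm_hasDerivWithin_le
      (f := y) (f' := fun r => u (y r, r))
      (fun r hr => (hy r).hasDerivWithinAt) hspeed hs ht_mem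
    rw [hyt] at key
    calc ‖y s - x‖ = ‖x - y s‖ := (norm_sub_rev _ _)
      _ ≤ (‖v‖ + 1) * ‖t - s‖ := key
      _ = (‖v‖ + 1) * (t - s) := by
          rw [Real.norm_eq_abs, abs_of_nonneg (by linarith [hs.2])]
  have hprod : ∀ s ∈ Icc (t - δ') t,
      ‖((y s, s) : EuclideanSpace ℝ (Fin d) × ℝ) - (x, t)‖ ≤ (‖v‖ + 1) * (t - s) := by
    intro s hs
    simp only [Prod.mk_sub_mk, Prod.norm_def]
    refine max_le (hy_lip s hs) ?_
    rw [Real.norm_eq_abs, abs_of_nonpos (by linarith [hs.2])]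
    nlinarith [hs.2, norm_nonneg v]
  -- the Taylor remainder function
  set g : ℝ → EuclideanSpace ℝ (Fin d) :=
    fun s => y s - x - (s - t) • v - ((s - t) ^ 2 / 2) • A with hgdef
  set g₁ : ℝ → EuclideanSpace ℝ (Fin d) :=
    fun s => u (y s, s) - v - (s - t) • A with hg₁def
  set g₂ : ℝ → EuclideanSpace ℝ (Fin d) := fun s => G (y s, s) - A with hg₂def
  have hg : ∀ s, HasDerivAt g (g₁ s) s := by
    intro s
    have h1 : HasDerivAt (fun s : ℝ => (s - t) • v) v s := by
      simpa using ((hasDerivAt_id s).sub_const t).smul_const v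
    have h2 : HasDerivAt (fun s : ℝ => ((s - t) ^ 2 / 2) • A) ((s - t) • A) s := by
      have := ((((hasDerivAt_id s).sub_const t).pow 2).div_const 2).smul_const A
      exact this.congr_deriv (by
        congr 1
        simp)
    exact (((hy s).sub_const x).sub h1).sub h2
  have hg₁ : ∀ s, HasDerivAt g₁ (g₂ s) s := by
    intro s
    have h1 : HasDerivAt (fun s => u (y s, s)) (G (y s, s)) s := by
      have hyp : HasDerivAt (fun r : ℝ => ((y r, r) : EuclideanSpace ℝ (Fin d) × ℝ))
          (u (y s, s), 1) s := by
        simpa using (hy s).prodMk (hasDerivAt_id s)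
      exact HasFDerivAt.comp_hasDerivAt (f := fun r : ℝ => ((y r, r) : EuclideanSpace ℝ (Fin d) × ℝ)) s ((hud (y s, s)).hasFDerivAt) hyp
    have h2 : HasDerivAt (fun s : ℝ => (s - t) • A) A s := by
      simpa using ((hasDerivAt_id s).sub_const t).smul_const A
    exact (h1.sub_const v).sub h2
  have hg₂c : Continuous g₂ :=
    ((hG.continuous).comp (hycont.prodMk continuous_id)).sub continuous_const
  have hgt : g t = 0 := by simp [hgdef, hyt]
  have hg₁t : g₁ t = 0 := by simp [hg₁def, hyt, hv]
  have hGA : G (x, t) = A := rfl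
  have hg₂b : ∀ s ∈ Icc (t - δ') t, ‖g₂ s‖ ≤ ((K₁ : ℝ) * (‖v‖ + 1)) * (t - s) := by
    intro s hs
    have hts : 0 ≤ t - s := by linarith [hs.2]
    have hdist : dist ((y s, s) : EuclideanSpace ℝ (Fin d) × ℝ) (x, t) ≤ r₁ := by
      rw [dist_eq_norm]
      refine (hprod s hs).trans ?_
      calc (‖v‖ + 1) * (t - s) ≤ (‖v‖ + 1) * δ' := by
            apply mul_le_mul_of_nonneg_left _ hv1.le
            linarith [hs.1]
        _ ≤ r₁ := hδ'r₁
    have hmem : ((y s, s) : EuclideanSpace ℝ (Fin d) × ℝ) ∈ s₁ := hr₁ hdist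
    have hxt : ((x, t) : EuclideanSpace ℝ (Fin d) × ℝ) ∈ s₁ :=
      hr₁ (mem_closedBall_self hr₁pos.le)
    have key := hG_lip.dist_le_mul _ hmem _ hxt
    rw [dist_eq_norm, dist_eq_norm] at key
    calc ‖g₂ s‖ = ‖G (y s, s) - G (x, t)‖ := by rw [hg₂def, hGA]
      _ ≤ (K₁ : ℝ) * ‖((y s, s) : EuclideanSpace ℝ (Fin d) × ℝ) - (x, t)‖ := key
      _ ≤ (K₁ : ℝ) * ((‖v‖ + 1) * (t - s)) := by
          exact mul_le_mul_of_nonneg_left (hprod s hs) K₁.coe_nonneg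
      _ = ((K₁ : ℝ) * (‖v‖ + 1)) * (t - s) := by ring
  have hKg : (0:ℝ) ≤ (K₁ : ℝ) * (‖v‖ + 1) := by positivity
  have hgb := taylor_two_bound g g₁ g₂ t δ' ((K₁ : ℝ) * (‖v‖ + 1)) hKg hg hg₁ hg₂c hgt hg₁t hg₂b
  -- the space derivative of ζ
  set Φ := fderiv ℝ ζ (x, t) with hΦdef
  have hfd : (fderiv ℝ (fun z => ζ (z, t)) x) A = Φ (A, 0) := by
    have : HasFDerivAt (fun z => ζ (z, t))
        (Φ.comp (ContinuousLinearMap.inl ℝ (EuclideanSpace ℝ (Fin d)) ℝ)) x :=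
      (hζd (x, t)).hasFDerivAt.comp x (hasFDerivAt_prodMk_left x t)
    rw [this.fderiv]
    rfl
  set Kg := (K₁ : ℝ) * (‖v‖ + 1) with hKgdef
  set δ : ℝ := min δ' (r₂ / (‖v‖ + 1)) with hδdef
  have hδpos : 0 < δ := lt_min hδ'pos (by positivity)
  set C : ℝ := (K₂ : ℝ) * (‖v‖ + 1) * (Kg * δ / 6 + ‖A‖ / 2) + ‖Φ‖ * Kg / 6 + 1 with hCdef
  have hCpos : 0 < C := by positivity
  refine ⟨C, hCpos, δ, hδpos, ?_⟩
  intro Δt hΔtpos hΔtδ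
  have hΔtδ' : Δt ≤ δ' := hΔtδ.le.trans (min_le_left _ _)
  have hΔtr₂ : (‖v‖ + 1) * Δt ≤ r₂ := by
    have h := hΔtδ.le.trans (min_le_right δ' (r₂ / (‖v‖ + 1)))
    calc (‖v‖ + 1) * Δt ≤ (‖v‖ + 1) * (r₂ / (‖v‖ + 1)) := mul_le_mul_of_nonneg_left h hv1.le
      _ = r₂ := by field_simp
  have hτmem : t - Δt ∈ Icc (t - δ') t := ⟨by linarith, by linarith⟩
  have hgτ : ‖g (t - Δt)‖ ≤ Kg * Δt ^ 3 / 6 := by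
    have := hgb (t - Δt) hτmem
    simpa using this
  -- membership of the two evaluation points in the closed ball
  have hmem1 : ((y (t - Δt), t - Δt) : EuclideanSpace ℝ (Fin d) × ℝ) ∈
      closedBall ((x, t) : EuclideanSpace ℝ (Fin d) × ℝ) ((‖v‖ + 1) * Δt) := by
    rw [mem_closedBall, dist_eq_norm]
    have := hprod (t - Δt) hτmem
    simpa using this
  have hmem2 : ((x - Δt • v, t - Δt) : EuclideanSpace ℝ (Fin d) × ℝ) ∈
      closedBall ((x, t) : EuclideanSpace ℝ (Fin d) × ℝ) ((‖v‖ + 1) * Δt) := by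
    rw [mem_closedBall, dist_eq_norm]; simp only [Prod.mk_sub_mk, Prod.norm_def]
    refine max_le ?_ ?_
    · have : x - Δt • v - x = -(Δt • v) := by abel
      rw [this, norm_neg, norm_smul, Real.norm_eq_abs, abs_of_pos hΔtpos]
      nlinarith [norm_nonneg v]
    · rw [Real.norm_eq_abs, show t - Δt - t = -Δt by ring, abs_neg, abs_of_pos hΔtpos]
      nlinarith [norm_nonneg v]
  have hsub : closedBall ((x, t) : EuclideanSpace ℝ (Fin d) × ℝ) ((‖v‖ + 1) * Δt) ⊆ s₂ :=
    (closedBall_subset_closedBall hΔtr₂).trans hr₂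
  have key := (convex_closedBall ((x, t) : EuclideanSpace ℝ (Fin d) × ℝ)
      ((‖v‖ + 1) * Δt)).norm_image_sub_le_of_norm_hasFDerivWithin_le'
    (f := ζ) (f' := fderiv ℝ ζ) (φ := Φ) (C := (K₂ : ℝ) * ((‖v‖ + 1) * Δt))
    (fun z hz => (hζd z).hasFDerivAt.hasFDerivWithinAt)
    (fun z hz => by
      have hk := hζ_lip.dist_le_mul z (hsub hz) (x, t) (hr₂ (mem_closedBall_self hr₂pos.le))
      rw [dist_eq_norm, dist_eq_norm] at hk
      refine hk.trans ?_
      exact mul_le_mul_of_nonneg_left (by simpa [dist_eq_norm] using hz) K₂.coe_nonneg)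
    hmem2 hmem1
  -- decompose the difference of points
  have hw : ((y (t - Δt), t - Δt) : EuclideanSpace ℝ (Fin d) × ℝ) - (x - Δt • v, t - Δt)
      = (g (t - Δt) + (Δt ^ 2 / 2) • A, 0) := by
    rw [Prod.mk_sub_mk]
    congr 1
    · rw [hgdef]
      simp only
      rw [show t - Δt - t = -Δt by ring]
      module
    · ring
  have hΦsplit : Φ (((y (t - Δt), t - Δt) : EuclideanSpace ℝ (Fin d) × ℝ) - (x - Δt • v, t - Δt))
      = Φ (g (t - Δt), 0) + (Δt ^ 2 / 2) • Φ (A, 0) := by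
    rw [hw, show ((g (t - Δt) + (Δt ^ 2 / 2) • A, (0:ℝ)) :
        EuclideanSpace ℝ (Fin d) × ℝ) = (g (t - Δt), 0) + (Δt ^ 2 / 2) • (A, 0) by
      simp [Prod.ext_iff], map_add, map_smul]
  have hnormw : ‖((y (t - Δt), t - Δt) : EuclideanSpace ℝ (Fin d) × ℝ) - (x - Δt • v, t - Δt)‖
      ≤ Kg * Δt ^ 3 / 6 + Δt ^ 2 / 2 * ‖A‖ := by
    rw [hw]; simp only [Prod.norm_def]
    refine max_le ?_ (by simp; positivity)
    refine (norm_add_le _ _).trans ?_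
    gcongr
    rw [norm_smul, Real.norm_eq_abs, abs_of_pos (by positivity)]
  -- final estimate
  rw [hfd]
  have hsplit : ζ (y (t - Δt), t - Δt) - ζ (x - Δt • v, t - Δt) - (Δt ^ 2 / 2) • Φ (A, 0)
      = (ζ (y (t - Δt), t - Δt) - ζ (x - Δt • v, t - Δt) -
          Φ (((y (t - Δt), t - Δt) : EuclideanSpace ℝ (Fin d) × ℝ) - (x - Δt • v, t - Δt)))
        + Φ (g (t - Δt), 0) := by
    rw [hΦsplit]; abel
  rw [hsplit]
  refine (norm_add_le _ _).trans ?_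
  have hb1 : ‖ζ (y (t - Δt), t - Δt) - ζ (x - Δt • v, t - Δt) -
      Φ (((y (t - Δt), t - Δt) : EuclideanSpace ℝ (Fin d) × ℝ) - (x - Δt • v, t - Δt))‖
      ≤ (K₂ : ℝ) * ((‖v‖ + 1) * Δt) * (Kg * Δt ^ 3 / 6 + Δt ^ 2 / 2 * ‖A‖) :=
    key.trans (mul_le_mul_of_nonneg_left hnormw (by positivity))
  have hb2 : ‖Φ ((g (t - Δt), 0) : EuclideanSpace ℝ (Fin d) × ℝ)‖ ≤ ‖Φ‖ * (Kg * Δt ^ 3 / 6) := by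
    refine (Φ.le_opNorm _).trans ?_
    apply mul_le_mul_of_nonneg_left _ (norm_nonneg Φ)
    simp only [Prod.norm_def]
    exact max_le hgτ (by simp; positivity)
  refine (add_le_add hb1 hb2).trans ?_
  have hΔt3 : Δt ^ 4 ≤ δ * Δt ^ 3 := by
    calc Δt ^ 4 = Δt * Δt ^ 3 := by ring
      _ ≤ δ * Δt ^ 3 := mul_le_mul_of_nonneg_right hΔtδ.le (pow_pos hΔtpos 3).le
  have hK₂0 : (0:ℝ) ≤ (K₂ : ℝ) := K₂.coe_nonneg
  have hΦ0 : (0:ℝ) ≤ ‖Φ‖ := norm_nonneg _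
  have hA0 : (0:ℝ) ≤ ‖A‖ := norm_nonneg _
  have h1 : Kg * Δt ^ 4 ≤ Kg * (δ * Δt ^ 3) := mul_le_mul_of_nonneg_left hΔt3 hKg
  have hmain : (K₂ : ℝ) * ((‖v‖ + 1) * Δt) * (Kg * Δt ^ 3 / 6 + Δt ^ 2 / 2 * ‖A‖)
        + ‖Φ‖ * (Kg * Δt ^ 3 / 6)
      ≤ ((K₂ : ℝ) * (‖v‖ + 1) * (Kg * δ / 6 + ‖A‖ / 2) + ‖Φ‖ * Kg / 6) * Δt ^ 3 := by
    nlinarith [mul_le_mul_of_nonneg_left h1 (mul_nonneg hK₂0 hv1.le)]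
  refine hmain.trans ?_
  rw [hCdef]
  exact mul_le_mul_of_nonneg_right (by linarith) (pow_pos hΔtpos 3).le
end

section
/- Suppose ζ(x,t) satisfies the Oldroyd-B relation ∂_t ζ + (u·∇)ζ − (∇u)ζ − ζ(∇u)ᵀ = −(1/Wi)(ζ − I) with u and ζ sufficiently smooth. Then F·ζ(y_Δt, t−Δt)·Fᵀ = ζ(x,t) − Δt·(upper convected derivative of ζ at (x,t)) + O(Δt²), where F = I + Δt·∇u(x,t) and y_Δt = x − Δt·u(x,t). -/
open Matrix

attribute [local instance] Matrix.normedAddCommGroup Matrix.normedSpace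

variable {d : ℕ}

lemma matMul_isBoundedBilinearMap :
    IsBoundedBilinearMap ℝ (fun p : Matrix (Fin d) (Fin d) ℝ × Matrix (Fin d) (Fin d) ℝ =>
      p.1 * p.2) where
  add_left x₁ x₂ y := add_mul x₁ x₂ y
  smul_left c x y := smul_mul_assoc c x y
  add_right x y₁ y₂ := mul_add x y₁ y₂
  smul_right c x y := mul_smul_comm c x y
  bound := by
    refine ⟨d + 1, by positivity, fun A B => ?_⟩
    have h : (0:ℝ) ≤ (d + 1) * ‖A‖ * ‖B‖ := by positivity
    rw [Matrix.norm_le_iff h]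
    intro i j
    calc ‖(A * B) i j‖ = ‖∑ k, A i k * B k j‖ := by rw [Matrix.mul_apply]
      _ ≤ ∑ k, ‖A i k * B k j‖ := norm_sum_le _ _
      _ ≤ ∑ _k : Fin d, ‖A‖ * ‖B‖ := by
          refine Finset.sum_le_sum fun k _ => ?_
          rw [norm_mul]
          exact mul_le_mul (Matrix.norm_entry_le_entrywise_sup_norm A)
            (Matrix.norm_entry_le_entrywise_sup_norm B) (norm_nonneg _) (norm_nonneg _)
      _ = d * (‖A‖ * ‖B‖) := by simp [mul_assoc]
      _ ≤ (d + 1) * ‖A‖ * ‖B‖ := by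
          have := mul_nonneg (norm_nonneg A) (norm_nonneg B)
          nlinarith [this]

lemma HasDerivAt.matMul {f g : ℝ → Matrix (Fin d) (Fin d) ℝ}
    {f' g' : Matrix (Fin d) (Fin d) ℝ} {s : ℝ}
    (hf : HasDerivAt f f' s) (hg : HasDerivAt g g' s) :
    HasDerivAt (fun r => f r * g r) (f' * g s + f s * g') s := by
  have h := (matMul_isBoundedBilinearMap.hasFDerivAt (f s, g s)).comp_hasDerivAt s (hf.prodMk hg)
  rw [add_comm]
  exact h

lemma ContDiff.matMul {n : WithTop ℕ∞} {f g : ℝ → Matrix (Fin d) (Fin d) ℝ}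
    (hf : ContDiff ℝ n f) (hg : ContDiff ℝ n g) :
    ContDiff ℝ n (fun r => f r * g r) :=
  matMul_isBoundedBilinearMap.contDiff.comp (hf.prodMk hg)

lemma quadBound {E : Type*} [NormedAddCommGroup E] [NormedSpace ℝ E] {f : ℝ → E}
    (hf : ContDiff ℝ 2 f) (h0 : f 0 = 0) (h1 : deriv f 0 = 0) :
    ∃ C > (0:ℝ), ∃ δ > (0:ℝ), ∀ Δt : ℝ, 0 < Δt → Δt < δ → ‖f Δt‖ ≤ C * Δt ^ 2 := by
  have hf2 : ContDiff ℝ (1 + 1) f := by norm_num; exact hf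
  have hdc : ContDiff ℝ 1 (deriv f) := (contDiff_succ_iff_deriv.mp hf2).2.2
  have hd : DifferentiableAt ℝ (deriv f) 0 := (hdc.differentiable one_ne_zero) 0
  have hO : (fun s => deriv f s) =O[nhds 0] (fun s : ℝ => s) := by
    have := hd.isBigO_sub
    simpa [h1] using this
  obtain ⟨c, hc0, hc⟩ := hO.exists_pos
  have hb := hc.bound
  rw [Metric.eventually_nhds_iff] at hb
  obtain ⟨δ, hδ0, hδ⟩ := hb
  refine ⟨c, hc0, δ, hδ0, fun Δt ht0 htδ => ?_⟩
  have hdiff : ∀ r ∈ Set.Icc (0:ℝ) Δt, HasDerivWithinAt f (deriv f r) (Set.Icc 0 Δt) r :=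
    fun r _ => ((hf.differentiable (by norm_num)) r).hasDerivAt.hasDerivWithinAt
  have hbd : ∀ r ∈ Set.Ico (0:ℝ) Δt, ‖deriv f r‖ ≤ c * Δt := by
    intro r hr
    have hrd : dist r 0 < δ := by
      rw [Real.dist_eq, sub_zero, abs_of_nonneg hr.1]
      exact lt_trans hr.2 htδ
    have := hδ hrd
    calc ‖deriv f r‖ ≤ c * ‖r‖ := this
      _ ≤ c * Δt := by
          rw [Real.norm_eq_abs, abs_of_nonneg hr.1]
          exact mul_le_mul_of_nonneg_left hr.2.le hc0.le
  have key := norm_image_sub_le_of_norm_deriv_le_segment' hdiff hbd Δt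
    (Set.right_mem_Icc.mpr ht0.le)
  rw [h0, sub_zero, sub_zero] at key
  calc ‖f Δt‖ ≤ c * Δt * Δt := key
    _ = c * Δt ^ 2 := by ring

/-- First-order consistency of the discrete upper convected derivative: for a
smooth solution `ζ` of the Oldroyd-B relation,
`F ζ(y_Δt, t-Δt) Fᵀ = ζ(x,t) - Δt (upper convected derivative of ζ at (x,t)) + O(Δt²)`,
where `F = I + Δt ∇u(x,t)` and `y_Δt = x - Δt u(x,t)`. -/
theorem discrete_upper_convected_consistency {d : ℕ}
    (u : EuclideanSpace ℝ (Fin d) × ℝ → EuclideanSpace ℝ (Fin d))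
    (hu : ContDiff ℝ 2 u)
    (ζ : EuclideanSpace ℝ (Fin d) × ℝ → Matrix (Fin d) (Fin d) ℝ)
    (hζ : ContDiff ℝ 2 ζ)
    (Wi : ℝ) (hWi : 0 < Wi)
    -- the velocity gradient matrix
    (G : EuclideanSpace ℝ (Fin d) → ℝ → Matrix (Fin d) (Fin d) ℝ)
    (hG : ∀ z s, G z s =
      Matrix.of fun i j => fderiv ℝ (fun z' => u (z', s)) z (EuclideanSpace.single j 1) i)
    -- the upper convected derivative of ζ
    (ucd : EuclideanSpace ℝ (Fin d) → ℝ → Matrix (Fin d) (Fin d) ℝ)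
    (hucd : ∀ z s, ucd z s =
      deriv (fun r => ζ (z, r)) s + fderiv ℝ (fun z' => ζ (z', s)) z (u (z, s))
        - G z s * ζ (z, s) - ζ (z, s) * (G z s)ᵀ)
    -- ζ satisfies the Oldroyd-B constitutive relation
    (hOB : ∀ z s, ucd z s = -(1 / Wi) • (ζ (z, s) - 1))
    (x : EuclideanSpace ℝ (Fin d)) (t : ℝ) :
    ∃ C > (0:ℝ), ∃ δ > (0:ℝ), ∀ Δt : ℝ, 0 < Δt → Δt < δ →
      ‖(1 + Δt • G x t) * ζ (x - Δt • u (x, t), t - Δt) * (1 + Δt • G x t)ᵀ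
          - ζ (x, t) + Δt • ucd x t‖ ≤ C * Δt ^ 2 := by
  have htr : ∀ s : ℝ, (1 + s • G x t)ᵀ = 1 + s • (G x t)ᵀ := fun s => by
    rw [Matrix.transpose_add, Matrix.transpose_smul, Matrix.transpose_one]
  set f : ℝ → Matrix (Fin d) (Fin d) ℝ := fun s =>
    (1 + s • G x t) * ζ (x - s • u (x, t), t - s) * (1 + s • (G x t)ᵀ)
      - ζ (x, t) + s • ucd x t with hfdef
  suffices h : ∃ C > (0:ℝ), ∃ δ > (0:ℝ), ∀ Δt : ℝ, 0 < Δt → Δt < δ → ‖f Δt‖ ≤ C * Δt ^ 2 by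
    obtain ⟨C, hC, δ, hδ, hh⟩ := h
    exact ⟨C, hC, δ, hδ, fun Δt h1 h2 => by rw [htr Δt]; exact hh Δt h1 h2⟩
  -- smoothness
  have hγ : ContDiff ℝ 2 (fun s : ℝ =>
      ((x - s • u (x, t) : EuclideanSpace ℝ (Fin d)), t - s)) :=
    (contDiff_const.sub (contDiff_id.smul contDiff_const)).prodMk
      (contDiff_const.sub contDiff_id)
  have hφ : ContDiff ℝ 2 (fun s : ℝ => ζ (x - s • u (x, t), t - s)) := hζ.comp hγ
  have hA1 : ContDiff ℝ 2 (fun s : ℝ =>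
      (1 : Matrix (Fin d) (Fin d) ℝ) + s • G x t) :=
    contDiff_const.add (contDiff_id.smul contDiff_const)
  have hA2 : ContDiff ℝ 2 (fun s : ℝ =>
      (1 : Matrix (Fin d) (Fin d) ℝ) + s • (G x t)ᵀ) :=
    contDiff_const.add (contDiff_id.smul contDiff_const)
  have hfC : ContDiff ℝ 2 f :=
    (((hA1.matMul hφ).matMul hA2).sub contDiff_const).add
      (contDiff_id.smul contDiff_const)
  have hf0 : f 0 = 0 := by simp [hfdef]
  -- derivatives
  have hζd : HasFDerivAt ζ (fderiv ℝ ζ (x, t)) (x, t) :=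
    ((hζ.differentiable (by norm_num)) (x, t)).hasFDerivAt
  have hx : HasFDerivAt (fun z' => ζ (z', t))
      ((fderiv ℝ ζ (x, t)).comp (ContinuousLinearMap.inl ℝ _ ℝ)) x :=
    hζd.comp x (hasFDerivAt_prodMk_left x t)
  have hxe : fderiv ℝ (fun z' => ζ (z', t)) x (u (x, t)) = fderiv ℝ ζ (x, t) (u (x, t), 0) := by
    rw [hx.fderiv]; rfl
  have ht' : HasDerivAt (fun r => ζ (x, r)) (fderiv ℝ ζ (x, t) (0, 1)) t := by
    have hc : HasDerivAt (fun r : ℝ => ((x : EuclideanSpace ℝ (Fin d)), r))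
        (((0 : EuclideanSpace ℝ (Fin d)), (1 : ℝ))) t :=
      (hasDerivAt_const t x).prodMk (hasDerivAt_id t)
    exact hζd.comp_hasDerivAt t hc
  have hte : deriv (fun r => ζ (x, r)) t = fderiv ℝ ζ (x, t) (0, 1) := ht'.deriv
  have hγ0 : HasDerivAt (fun s : ℝ =>
      ((x - s • u (x, t) : EuclideanSpace ℝ (Fin d)), t - s))
      ((-(u (x, t)), (-1 : ℝ))) 0 := by
    have h1 : HasDerivAt (fun s : ℝ => x - s • u (x, t)) (-(u (x, t))) 0 := by
      simpa using ((hasDerivAt_id (0 : ℝ)).smul_const (u (x, t))).const_sub x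
    have h2 : HasDerivAt (fun s : ℝ => t - s) (-1) 0 := by
      simpa using (hasDerivAt_id (0 : ℝ)).const_sub t
    exact h1.prodMk h2
  have hW : fderiv ℝ ζ (x, t) (-(u (x, t)), (-1 : ℝ)) =
      -(deriv (fun r => ζ (x, r)) t) - fderiv ℝ (fun z' => ζ (z', t)) x (u (x, t)) := by
    have h1 : ((-(u (x, t)), (-1 : ℝ)) : EuclideanSpace ℝ (Fin d) × ℝ) =
        -((u (x, t), (0 : ℝ))) - (((0 : EuclideanSpace ℝ (Fin d)), (1 : ℝ))) := by
      simp [Prod.ext_iff]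
    rw [h1, map_sub, map_neg, hxe, hte]
    abel
  have hφ0 : HasDerivAt (fun s : ℝ => ζ (x - s • u (x, t), t - s))
      (-(deriv (fun r => ζ (x, r)) t) - fderiv ℝ (fun z' => ζ (z', t)) x (u (x, t))) 0 := by
    rw [← hW]
    exact hζd.comp_hasDerivAt_of_eq 0 hγ0 (by simp)
  have hA1d : HasDerivAt (fun s : ℝ =>
      (1 : Matrix (Fin d) (Fin d) ℝ) + s • G x t) (G x t) 0 := by
    have h := ((hasDerivAt_id (0 : ℝ)).smul_const (G x t)).const_add 1
    simp only [id, one_smul] at h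
    exact h
  have hA2d : HasDerivAt (fun s : ℝ =>
      (1 : Matrix (Fin d) (Fin d) ℝ) + s • (G x t)ᵀ) ((G x t)ᵀ) 0 := by
    have h := ((hasDerivAt_id (0 : ℝ)).smul_const ((G x t)ᵀ)).const_add 1
    simp only [id, one_smul] at h
    exact h
  have hlin : HasDerivAt (fun s : ℝ => s • ucd x t) (ucd x t) 0 := by
    have h := (hasDerivAt_id (0 : ℝ)).smul_const (ucd x t)
    simp only [id, one_smul] at h
    exact h
  have hfd := (((hA1d.matMul hφ0).matMul hA2d).sub_const (ζ (x, t))).add hlin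
  have hderiv0 : deriv f 0 = 0 := by
    rw [show deriv f 0 = _ from hfd.deriv]
    simp only [zero_smul, add_zero, sub_zero, one_mul, mul_one]
    rw [hucd x t]
    abel
  exact quadBound hfC hf0 hderiv0
end
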